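/- Let Δ ∈ ℝ^{n×n} be symmetric with GWM A = nΔ, and let h : ℝ → ℝ be continuous. Then for every signal x ∈ ℂⁿ one has ψ_{h(Δ)x} = h(T_{W_A}) ψ_x in L²[0,1]. -/

import Mathlib

open MeasureTheory Filter

noncomputable section

/-- Lebesgue measure restricted to `[0,1]`. -/
abbrev μ01 : Measure ℝ := volume.restrict (Set.Icc 0 1)

instance : IsFiniteMeasure μ01 := by
  constructor
  rw [Measure.restrict_apply_univ, Real.volume_Icc]
  exact ENNReal.ofReal_lt_top

/-- The space `L²[0,1]` (complex valued). -/
abbrev L2 := Lp ℂ 2 μ01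

/-- The real continuous functional calculus on operators of `L2` (the generic instance is no
longer found by unification, as `L2` carries its own `ℝ`-module structure). -/
instance L2.instCFCReal : ContinuousFunctionalCalculus ℝ (L2 →L[ℂ] L2) IsSelfAdjoint :=
  IsSelfAdjoint.instContinuousFunctionalCalculus

/-- The `j`-th interval `P_j = [j/n, (j+1)/n)` of the standard partition of `[0,1]`
(0-indexed version of `[(j-1)/n, j/n)`). -/
def part (n : ℕ) (j : Fin n) : Set ℝ := Set.Ico ((j : ℝ) / n) (((j : ℝ) + 1) / n)

lemma part_meas (n : ℕ) (j : Fin n) : MeasurableSet (part n j) := measurableSet_Ico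

lemma part_ne_top (n : ℕ) (j : Fin n) : μ01 (part n j) ≠ ⊤ := (measure_lt_top _ _).ne

/-- The graphon `W_B` induced by an `n × n` matrix `B`:
`W_B(u,v) = ∑_{i,j} B i j · 1_{P_i}(u) · 1_{P_j}(v)`. -/
def inducedGraphon {n : ℕ} (B : Matrix (Fin n) (Fin n) ℝ) : ℝ → ℝ → ℝ :=
  fun u v => ∑ i, ∑ j, B i j * (part n i).indicator 1 u * (part n j).indicator 1 v

/-- The graphon signal `ψ_x = ∑_j x_j · 1_{P_j} ∈ L²[0,1]` induced by `x ∈ ℂⁿ`. -/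
def inducedSignal {n : ℕ} (x : Fin n → ℂ) : L2 :=
  ∑ j, indicatorConstLp 2 (part_meas n j) (part_ne_top n j) (x j)

/-- `W` is a graphon: bounded, symmetric and measurable `[0,1]² → ℝ`
(realized as a function on all of `ℝ²`; only its values matter w.r.t. `μ01`). -/
structure IsGraphon (W : ℝ → ℝ → ℝ) : Prop where
  symm : ∀ u v, W u v = W v u
  meas : Measurable (Function.uncurry W)
  bdd : ∃ C, ∀ u v, |W u v| ≤ C

/-- `T` is the graphon shift operator of `W`: `(T f)(v) = ∫₀¹ W(v,u) f(u) du`. -/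
def IsGRSO (W : ℝ → ℝ → ℝ) (T : L2 →L[ℂ] L2) : Prop :=
  ∀ f : L2, ∀ᵐ v ∂μ01, T f v = ∫ u, (W v u : ℂ) * f u ∂μ01

/-- Entrywise complexification of a real activation function. -/
def rhoC (ρ : ℝ → ℝ) (z : ℂ) : ℂ := (ρ z.re : ℂ) + (ρ z.im : ℂ) * Complex.I

/-- The realization of an SCNN (filters `filt`, weights `wt`, activation `ρ`) on a graph with
GSO `Δ`: `graphNet F filt wt ρ Δ x l j` is the `j`-th feature of the `l`-th layer, on input
feature map `x`.  Layer `l+1` is obtained from layer `l` via the filters `filt l j k`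
and weights `wt l j k`. -/
def graphNet (F : ℕ → ℕ) (filt : ℕ → ℕ → ℕ → ℝ → ℝ) (wt : ℕ → ℕ → ℕ → ℝ)
    (ρ : ℝ → ℝ) {n : ℕ} (Δ : Matrix (Fin n) (Fin n) ℝ) (x : ℕ → Fin n → ℂ) :
    ℕ → ℕ → Fin n → ℂ
  | 0, j => x j
  | (l + 1), j => fun v =>
      rhoC ρ (∑ k ∈ Finset.range (F l),
        (wt l j k : ℂ) * (((cfc (filt l j k) Δ).map Complex.ofReal).mulVec
          (graphNet F filt wt ρ Δ x l k)) v)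

/-- `y` is a realization of the SCNN (filters `filt`, weights `wt`, activation `ρ`,
`Lnum` layers, feature dimensions `F`) on the graphon shift operator `T`:
`y l j` is the `j`-th feature of the `l`-th layer, and each layer is obtained from the
previous one by filtering with `cfc (filt l j k) T`, taking weighted sums, and applying
the activation pointwise almost everywhere. -/
def IsGraphonNet (Lnum : ℕ) (F : ℕ → ℕ) (filt : ℕ → ℕ → ℕ → ℝ → ℝ) (wt : ℕ → ℕ → ℕ → ℝ)
    (ρ : ℝ → ℝ) (T : L2 →L[ℂ] L2) (y : ℕ → ℕ → L2) : Prop :=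
  ∀ l < Lnum, ∀ j < F (l + 1),
    ⇑(y (l + 1) j) =ᵐ[μ01]
      fun v => rhoC ρ
        (((∑ k ∈ Finset.range (F l),
          (wt l j k : ℂ) • (cfc (filt l j k) T) (y l k) : L2) : ℝ → ℂ) v)


lemma part_subset (n : ℕ) (j : Fin n) : part n j ⊆ Set.Icc 0 1 := by
  have hn : 0 < (n : ℝ) := by exact_mod_cast j.pos
  intro u hu
  obtain ⟨h1, h2⟩ := hu
  constructor
  · exact le_trans (by positivity) h1
  · refine le_trans h2.le (by
      rw [div_le_one hn]
      exact_mod_cast Nat.succ_le_of_lt j.isLt)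

lemma meas_part (n : ℕ) (j : Fin n) : μ01 (part n j) = ENNReal.ofReal (1 / n) := by
  rw [Measure.restrict_apply (part_meas n j), Set.inter_eq_left.mpr (part_subset n j),
    part, Real.volume_Ico]
  congr 1
  have hn : 0 < (n : ℝ) := by exact_mod_cast j.pos
  field_simp
  ring

lemma part_disjoint (n : ℕ) {i j : Fin n} (hij : i ≠ j) : Disjoint (part n i) (part n j) := by
  have hn : 0 < (n : ℝ) := by exact_mod_cast i.pos
  rcases lt_or_gt_of_ne (fun hc => hij (Fin.ext hc) : (i:ℕ) ≠ (j:ℕ)) with hlt | hlt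
  · apply Set.Ico_disjoint_Ico.mpr
    rw [min_le_iff]
    left
    rw [le_max_iff]; right
    apply div_le_div_of_nonneg_right ?_ hn.le |>.trans_eq rfl
    · exact_mod_cast Nat.succ_le_of_lt hlt
  · apply Set.Ico_disjoint_Ico.mpr
    rw [min_le_iff]; right
    rw [le_max_iff]; left
    apply div_le_div_of_nonneg_right ?_ hn.le |>.trans_eq rfl
    exact_mod_cast Nat.succ_le_of_lt hlt
lemma coeFn_finset_sum {ι : Type*} (s : Finset ι) (f : ι → L2) :
    ⇑(∑ i ∈ s, f i) =ᵐ[μ01] fun v => ∑ i ∈ s, f i v := by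
  classical
  induction s using Finset.induction_on with
  | empty => simp only [Finset.sum_empty]; exact Lp.coeFn_zero ℂ 2 μ01
  | insert a s hni ih =>
    rw [Finset.sum_insert hni]
    filter_upwards [Lp.coeFn_add (f a) (∑ i ∈ s, f i), ih] with v h1 h2
    rw [h1, Pi.add_apply, h2, Finset.sum_insert hni]

lemma sig_coe {n : ℕ} (x : Fin n → ℂ) :
    ⇑(inducedSignal x) =ᵐ[μ01]
      fun v => ∑ j, (part n j).indicator (fun _ => x j) v := by
  have h1 := coeFn_finset_sum Finset.univ
    (fun j => indicatorConstLp 2 (part_meas n j) (part_ne_top n j) (x j))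
  have h2 : ∀ j : Fin n, ⇑(indicatorConstLp 2 (part_meas n j) (part_ne_top n j) (x j))
      =ᵐ[μ01] (part n j).indicator (fun _ => x j) := fun j => indicatorConstLp_coeFn
  rw [inducedSignal]
  refine h1.trans ?_
  have : ∀ᵐ v ∂μ01, ∀ j : Fin n,
      (indicatorConstLp 2 (part_meas n j) (part_ne_top n j) (x j) : ℝ → ℂ) v
        = (part n j).indicator (fun _ => x j) v := ae_all_iff.mpr h2
  filter_upwards [this] with v hv
  exact Finset.sum_congr rfl fun j _ => hv j

lemma indicatorConstLp_eq_smul {n : ℕ} (j : Fin n) (c : ℂ) :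
    indicatorConstLp 2 (part_meas n j) (part_ne_top n j) c
      = c • indicatorConstLp 2 (part_meas n j) (part_ne_top n j) (1 : ℂ) := by
  apply Lp.ext
  filter_upwards [indicatorConstLp_coeFn (p := 2) (hs := part_meas n j) (hμs := part_ne_top n j) (c := c),
    Lp.coeFn_smul c (indicatorConstLp 2 (part_meas n j) (part_ne_top n j) (1 : ℂ)),
    indicatorConstLp_coeFn (p := 2) (hs := part_meas n j) (hμs := part_ne_top n j) (c := (1:ℂ))] with v h1 h2 h3
  rw [h1, h2, Pi.smul_apply, h3, smul_eq_mul, ← Set.indicator_const_mul]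
  simp

lemma sig_add {n : ℕ} (x y : Fin n → ℂ) :
    inducedSignal (x + y) = inducedSignal x + inducedSignal y := by
  rw [inducedSignal, inducedSignal, inducedSignal, ← Finset.sum_add_distrib]
  refine Finset.sum_congr rfl fun j _ => ?_
  rw [Pi.add_apply, indicatorConstLp_eq_smul j (x j + y j), indicatorConstLp_eq_smul j (x j),
    indicatorConstLp_eq_smul j (y j), add_smul]

lemma sig_smul {n : ℕ} (c : ℂ) (x : Fin n → ℂ) :
    inducedSignal (c • x) = c • inducedSignal x := by
  rw [inducedSignal, inducedSignal, Finset.smul_sum]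
  refine Finset.sum_congr rfl fun j _ => ?_
  rw [Pi.smul_apply, indicatorConstLp_eq_smul j (c • x j), indicatorConstLp_eq_smul j (x j),
    smul_eq_mul, mul_smul]

lemma ind_cast (s : Set ℝ) (c : ℂ) (v : ℝ) :
    s.indicator (fun _ => c) v = c * ((s.indicator (1 : ℝ → ℝ) v : ℝ) : ℂ) := by
  by_cases hv : v ∈ s <;> simp [Set.indicator_apply, hv]

lemma ind_mul_cast (s : Set ℝ) (f : ℝ → ℂ) (u : ℝ) :
    ((s.indicator (1 : ℝ → ℝ) u : ℝ) : ℂ) * f u = s.indicator f u := by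
  by_cases hu : u ∈ s <;> simp [Set.indicator_apply, hu]

lemma pi_sig {n : ℕ} (x : Fin n → ℂ) (j : Fin n) :
    (n : ℂ) * ∫ u in part n j, inducedSignal x u ∂μ01 = x j := by
  have hn : (0:ℝ) < n := by exact_mod_cast j.pos
  have h1 : ∫ u in part n j, inducedSignal x u ∂μ01
      = ∫ u in part n j, ∑ k, (part n k).indicator (fun _ => x k) u ∂μ01 :=
    setIntegral_congr_ae (part_meas n j) ((sig_coe x).mono fun u hu _ => hu)
  rw [h1, integral_finset_sum _ (fun k _ => (integrable_const (x k)).indicator (part_meas n k))]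
  have h2 : ∀ k : Fin n, ∫ u in part n j, (part n k).indicator (fun _ => x k) u ∂μ01
      = (μ01 (part n j ∩ part n k)).toReal • x k := by
    intro k
    rw [setIntegral_indicator (part_meas n k), setIntegral_const]
    rfl
  rw [Finset.sum_congr rfl fun k _ => h2 k, Finset.sum_eq_single j]
  · rw [Set.inter_self, meas_part, ENNReal.toReal_ofReal (by positivity)]
    rw [Complex.real_smul]
    push_cast
    rw [← mul_assoc, mul_one_div, div_self (by exact_mod_cast hn.ne' : (n:ℂ) ≠ 0), one_mul]
  · intro k _ hkj
    rw [Set.disjoint_iff_inter_eq_empty.mp (part_disjoint n (Ne.symm hkj))]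
    simp
  · intro hj; exact absurd (Finset.mem_univ j) hj

lemma T_eq {n : ℕ} (Δ : Matrix (Fin n) (Fin n) ℝ) (T : L2 →L[ℂ] L2)
    (hT : IsGRSO (inducedGraphon ((n : ℝ) • Δ)) T) (f : L2) :
    T f = inducedSignal ((Δ.map Complex.ofReal).mulVec
      (fun j => (n : ℂ) * ∫ u in part n j, f u ∂μ01)) := by
  have hfint : Integrable (⇑f) μ01 := (Lp.memLp f).integrable one_le_two
  apply Lp.ext
  filter_upwards [hT f, sig_coe ((Δ.map Complex.ofReal).mulVec
      (fun j => (n : ℂ) * ∫ u in part n j, f u ∂μ01))] with v h1 h2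
  rw [h1, h2]
  have step1 : (fun u => ((inducedGraphon ((n:ℝ)•Δ) v u : ℝ) : ℂ) * f u)
      = fun u => ∑ i, ∑ j, ((((n:ℝ)•Δ) i j * (part n i).indicator 1 v : ℝ) : ℂ)
          * (part n j).indicator (⇑f) u := by
    funext u
    rw [inducedGraphon]
    push_cast
    rw [Finset.sum_mul]
    refine Finset.sum_congr rfl fun i _ => ?_
    rw [Finset.sum_mul]
    refine Finset.sum_congr rfl fun j _ => ?_
    rw [← ind_mul_cast (part n j) (⇑f) u]
    push_cast
    ring
  rw [step1, integral_finset_sum _ (fun i _ => integrable_finset_sum _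
    (fun j _ => (hfint.indicator (part_meas n j)).const_mul _))]
  refine Finset.sum_congr rfl fun i _ => ?_
  rw [integral_finset_sum _ (fun j _ => (hfint.indicator (part_meas n j)).const_mul _), ind_cast]
  simp only [Matrix.mulVec, dotProduct, Matrix.map_apply]
  rw [Finset.sum_mul]
  refine Finset.sum_congr rfl fun j _ => ?_
  rw [MeasureTheory.integral_const_mul, integral_indicator (part_meas n j)]
  simp only [Matrix.smul_apply, smul_eq_mul, Complex.ofReal_mul, Complex.ofReal_natCast]
  ring

lemma T_sig {n : ℕ} (Δ : Matrix (Fin n) (Fin n) ℝ) (T : L2 →L[ℂ] L2)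
    (hT : IsGRSO (inducedGraphon ((n : ℝ) • Δ)) T) (x : Fin n → ℂ) :
    T (inducedSignal x) = inducedSignal ((Δ.map Complex.ofReal).mulVec x) := by
  rw [T_eq Δ T hT]
  congr 1
  rw [show (fun j => (n:ℂ) * ∫ u in part n j, (inducedSignal x) u ∂μ01) = x
    from funext fun j => pi_sig x j]

lemma T_pow {n : ℕ} (Δ : Matrix (Fin n) (Fin n) ℝ) (T : L2 →L[ℂ] L2)
    (hT : IsGRSO (inducedGraphon ((n : ℝ) • Δ)) T) (x : Fin n → ℂ) (k : ℕ) :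
    (T ^ k) (inducedSignal x) = inducedSignal (((Δ.map Complex.ofReal) ^ k).mulVec x) := by
  induction k generalizing x with
  | zero => simp [Matrix.one_mulVec]
  | succ k ih =>
    rw [pow_succ, pow_succ (Δ.map Complex.ofReal), ContinuousLinearMap.mul_apply, T_sig Δ T hT,
      ih, Matrix.mulVec_mulVec]

lemma inner_sig {n : ℕ} (y : Fin n → ℂ) (g : L2) :
    @inner ℂ _ _ (inducedSignal y) g
      = ∑ j, (starRingEnd ℂ) (y j) * ∫ u in part n j, g u ∂μ01 := by
  rw [inducedSignal, sum_inner]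
  refine Finset.sum_congr rfl fun j _ => ?_
  rw [L2.inner_indicatorConstLp_eq_inner_setIntegral ℂ (part_meas n j) (part_ne_top n j) (y j) g]
  simp [RCLike.inner_apply]
  ring

lemma T_sa {n : ℕ} (Δ : Matrix (Fin n) (Fin n) ℝ) (hΔ : Δ.IsSymm) (T : L2 →L[ℂ] L2)
    (hT : IsGRSO (inducedGraphon ((n : ℝ) • Δ)) T) : IsSelfAdjoint T := by
  rw [ContinuousLinearMap.isSelfAdjoint_iff_isSymmetric]
  intro f g
  simp only [ContinuousLinearMap.coe_coe]
  rw [T_eq Δ T hT f, T_eq Δ T hT g, inner_sig, ← inner_conj_symm, inner_sig]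
  simp only [Matrix.mulVec, dotProduct, Matrix.map_apply, map_sum, map_mul,
    Complex.conj_conj, Complex.conj_ofReal, map_natCast, Finset.sum_mul]
  rw [Finset.sum_comm]
  refine Finset.sum_congr rfl fun j _ => Finset.sum_congr rfl fun k _ => ?_
  have hsymm : Δ k j = Δ j k := congrFun (congrFun hΔ j) k
  rw [hsymm]
  ring

instance : Nontrivial L2 := by
  refine nontrivial_of_ne (indicatorConstLp 2
    (measurableSet_Icc : MeasurableSet (Set.Icc (0:ℝ) 1)) (measure_lt_top _ _).ne (1:ℂ)) 0
    fun hc => ?_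
  have h1 := norm_indicatorConstLp (μ := μ01) (s := Set.Icc (0:ℝ) 1)
    (hs := measurableSet_Icc) (hμs := (measure_lt_top μ01 _).ne) (c := (1:ℂ))
    two_ne_zero ENNReal.ofNat_ne_top
  rw [hc, norm_zero] at h1
  have h2 : μ01 (Set.Icc (0:ℝ) 1) = 1 := by
    rw [Measure.restrict_apply measurableSet_Icc, Set.inter_self, Real.volume_Icc]
    norm_num
  rw [measureReal_def, h2] at h1
  simp at h1

lemma mapOfReal_smul {n : ℕ} (a : ℝ) (M : Matrix (Fin n) (Fin n) ℝ) :
    (a • M).map Complex.ofReal = (a : ℂ) • M.map Complex.ofReal := by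
  ext i j; simp [Matrix.map_apply]

lemma mapOfReal_add {n : ℕ} (M N : Matrix (Fin n) (Fin n) ℝ) :
    (M + N).map Complex.ofReal = M.map Complex.ofReal + N.map Complex.ofReal := by
  ext i j; simp [Matrix.map_apply]

lemma mapOfReal_pow {n : ℕ} (M : Matrix (Fin n) (Fin n) ℝ) (k : ℕ) :
    (M ^ k).map Complex.ofReal = (M.map Complex.ofReal) ^ k := by
  have hmap : ∀ P : Matrix (Fin n) (Fin n) ℝ, P.map Complex.ofReal
      = Complex.ofRealHom.mapMatrix P := fun P => rfl
  rw [hmap, hmap, map_pow]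

lemma key_poly {n : ℕ} (Δ : Matrix (Fin n) (Fin n) ℝ) (T : L2 →L[ℂ] L2)
    (hT : IsGRSO (inducedGraphon ((n : ℝ) • Δ)) T) (x : Fin n → ℂ) (q : Polynomial ℝ) :
    inducedSignal (((Polynomial.aeval Δ q).map Complex.ofReal).mulVec x)
      = (Polynomial.aeval T q) (inducedSignal x) := by
  induction q using Polynomial.induction_on' with
  | add p q hp hq =>
    rw [map_add, map_add, mapOfReal_add, Matrix.add_mulVec, sig_add, hp, hq,
      ContinuousLinearMap.add_apply]
  | monomial k a =>
    rw [Polynomial.aeval_monomial, Polynomial.aeval_monomial,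
      Algebra.algebraMap_eq_smul_one, smul_mul_assoc, one_mul, mapOfReal_smul, mapOfReal_pow,
      Matrix.smul_mulVec, sig_smul, ← T_pow Δ T hT x k,
      Algebra.algebraMap_eq_smul_one, smul_mul_assoc, one_mul, ContinuousLinearMap.smul_apply]
    rw [← algebraMap_smul ℂ a ((T ^ k) (inducedSignal x)), Complex.coe_algebraMap]

lemma unitary_entry_le {n : ℕ} (U : Matrix.unitaryGroup (Fin n) ℝ) (a b : Fin n) :
    |(U : Matrix (Fin n) (Fin n) ℝ) a b| ≤ 1 := by
  have hmem : (U : Matrix (Fin n) (Fin n) ℝ) * star (U : Matrix (Fin n) (Fin n) ℝ) = 1 :=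
    Matrix.mem_unitaryGroup_iff.mp U.prop
  have h1 : ∑ l, (U : Matrix (Fin n) (Fin n) ℝ) a l * (U : Matrix (Fin n) (Fin n) ℝ) a l
      = 1 := by
    have := congrFun (congrFun hmem a) a
    rw [Matrix.mul_apply] at this
    simpa [Matrix.star_apply, Matrix.one_apply] using this
  rw [← sq_le_one_iff_abs_le_one, sq]
  rw [← h1]
  exact Finset.single_le_sum
    (f := fun l => (U : Matrix (Fin n) (Fin n) ℝ) a l * (U : Matrix (Fin n) (Fin n) ℝ) a l)
    (fun l _ => mul_self_nonneg _) (Finset.mem_univ b)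

lemma cfc_entry_bound {n : ℕ} (Δ : Matrix (Fin n) (Fin n) ℝ) (hherm : Δ.IsHermitian)
    (g : ℝ → ℝ) (j k : Fin n) :
    |cfc g Δ j k| ≤ ∑ i, |g (hherm.eigenvalues i)| := by
  rw [hherm.cfc_eq g, Matrix.IsHermitian.cfc]
  rw [Unitary.conjStarAlgAut_apply, Matrix.mul_apply]
  refine (Finset.abs_sum_le_sum_abs _ _).trans (Finset.sum_le_sum fun l _ => ?_)
  rw [Matrix.mul_diagonal, Matrix.star_apply, star_trivial, abs_mul, abs_mul]
  calc |(hherm.eigenvectorUnitary : Matrix (Fin n) (Fin n) ℝ) j l|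
        * |(RCLike.ofReal ∘ g ∘ hherm.eigenvalues) l|
        * |(hherm.eigenvectorUnitary : Matrix (Fin n) (Fin n) ℝ) k l|
      ≤ 1 * |(RCLike.ofReal ∘ g ∘ hherm.eigenvalues) l| * 1 := by
        have h1 := unitary_entry_le hherm.eigenvectorUnitary j l
        have h2 := unitary_entry_le hherm.eigenvectorUnitary k l
        exact mul_le_mul (mul_le_mul h1 le_rfl (abs_nonneg _) zero_le_one) h2 (abs_nonneg _)
          (by positivity)
    _ = |g (hherm.eigenvalues l)| := by simp [RCLike.ofReal]

lemma sig_norm_le {n : ℕ} (y : Fin n → ℂ) : ‖inducedSignal y‖ ≤ ∑ j, ‖y j‖ := by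
  rw [inducedSignal]
  refine (norm_sum_le _ _).trans (Finset.sum_le_sum fun j _ => ?_)
  rw [norm_indicatorConstLp two_ne_zero ENNReal.ofNat_ne_top]
  have hμ : (μ01 (part n j)).toReal ≤ 1 := by
    have h1 : μ01 (part n j) ≤ 1 := by
      refine (measure_mono (Set.subset_univ _)).trans_eq ?_
      rw [Measure.restrict_apply_univ, Real.volume_Icc]; norm_num
    exact ENNReal.toReal_le_of_le_ofReal one_pos.le (by simpa using h1)
  calc ‖y j‖ * (μ01 (part n j)).toReal ^ (1 / (2:ENNReal).toReal)
      ≤ ‖y j‖ * 1 :=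
        mul_le_mul_of_nonneg_left
          (Real.rpow_le_one ENNReal.toReal_nonneg hμ (by norm_num)) (norm_nonneg _)
    _ = ‖y j‖ := mul_one _

lemma mapOfReal_sub {n : ℕ} (M N : Matrix (Fin n) (Fin n) ℝ) :
    (M - N).map Complex.ofReal = M.map Complex.ofReal - N.map Complex.ofReal := by
  ext i j; simp [Matrix.map_apply]

lemma sig_sub {n : ℕ} (x y : Fin n → ℂ) :
    inducedSignal (x - y) = inducedSignal x - inducedSignal y := by
  have := sig_add (x - y) y
  rw [sub_add_cancel] at this
  rw [this]; abel


set_option maxHeartbeats 1000000 in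
/-- For symmetric `Δ` with GWM `A = nΔ` and continuous `h : ℝ → ℝ`, for every
signal `x ∈ ℂⁿ` one has `ψ_{h(Δ)x} = h(T_{W_A}) ψ_x` in `L²[0,1]`. -/
theorem statement3 (n : ℕ) (Δ : Matrix (Fin n) (Fin n) ℝ) (hΔ : Δ.IsSymm)
    (h : ℝ → ℝ) (hh : Continuous h)
    (T : L2 →L[ℂ] L2) (hT : IsGRSO (inducedGraphon ((n : ℝ) • Δ)) T)
    (x : Fin n → ℂ) :
    inducedSignal (((cfc h Δ).map Complex.ofReal).mulVec x) = cfc h T (inducedSignal x) := by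
  have hherm : Δ.IsHermitian := by
    rwa [Matrix.IsHermitian, Matrix.conjTranspose_eq_transpose_of_trivial]
  have hsaΔ : IsSelfAdjoint Δ := hherm.isSelfAdjoint
  have hsaT : IsSelfAdjoint T := T_sa Δ hΔ T hT
  set E : ℝ := ∑ i, |hherm.eigenvalues i| with hE
  have hE0 : 0 ≤ E := Finset.sum_nonneg fun i _ => abs_nonneg _
  set R : ℝ := ‖T‖ + E with hR
  have hRT : ∀ t ∈ spectrum ℝ T, t ∈ Set.Icc (-R) R := by
    intro t ht
    have h1 := spectrum.norm_le_norm_of_mem ht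
    rw [Real.norm_eq_abs] at h1
    constructor
    · nlinarith [neg_abs_le t]
    · nlinarith [le_abs_self t]
  have hRev : ∀ i, hherm.eigenvalues i ∈ Set.Icc (-R) R := by
    intro i
    have h1 : |hherm.eigenvalues i| ≤ E := Finset.single_le_sum
      (f := fun i => |hherm.eigenvalues i|) (fun i _ => abs_nonneg _) (Finset.mem_univ i)
    have h2 : (0:ℝ) ≤ ‖T‖ := norm_nonneg T
    constructor
    · nlinarith [neg_abs_le (hherm.eigenvalues i)]
    · nlinarith [le_abs_self (hherm.eigenvalues i)]
  rw [← sub_eq_zero]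
  by_contra hne
  set d := inducedSignal (((cfc h Δ).map Complex.ofReal).mulVec x) - cfc h T (inducedSignal x)
    with hd
  have hdpos : 0 < ‖d‖ := norm_pos_iff.mpr hne
  set C : ℝ := (n:ℝ) * ((n:ℝ) * ∑ k, ‖x k‖) + ‖inducedSignal x‖ + 1 with hC
  have hxs0 : 0 ≤ ∑ k, ‖x k‖ := Finset.sum_nonneg fun k _ => norm_nonneg _
  have hC0 : 0 < C := by positivity
  set ε : ℝ := ‖d‖ / (2 * C) with hε
  have hε0 : 0 < ε := by positivity
  obtain ⟨q, hq⟩ := exists_polynomial_near_of_continuousOn (-R) R h hh.continuousOn ε hε0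
  -- bound on h - q.eval on [-R, R]
  have hbound : ∀ t ∈ Set.Icc (-R) R, |h t - q.eval t| ≤ ε := by
    intro t ht
    rw [abs_sub_comm]
    exact (hq t ht).le
  -- polynomial identity
  have hqT : inducedSignal (((cfc q.eval Δ).map Complex.ofReal).mulVec x)
      = cfc q.eval T (inducedSignal x) := by
    rw [cfc_polynomial q Δ, cfc_polynomial q T]
    exact key_poly Δ T hT x q
  -- estimate 1
  have hest1 : ‖inducedSignal (((cfc h Δ).map Complex.ofReal).mulVec x)
      - inducedSignal (((cfc q.eval Δ).map Complex.ofReal).mulVec x)‖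
      ≤ (n:ℝ) * ((n:ℝ) * ∑ k, ‖x k‖) * ε := by
    rw [← sig_sub, ← Matrix.sub_mulVec, ← mapOfReal_sub,
      ← cfc_sub h q.eval Δ hh.continuousOn (Polynomial.continuous q).continuousOn]
    refine (sig_norm_le _).trans ?_
    have hentry : ∀ j k : Fin n, |cfc (fun t => h t - q.eval t) Δ j k| ≤ (n:ℝ) * ε := by
      intro j k
      refine (cfc_entry_bound Δ hherm _ j k).trans ?_
      calc ∑ i, |h (hherm.eigenvalues i) - q.eval (hherm.eigenvalues i)|
          ≤ ∑ _i : Fin n, ε :=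
            Finset.sum_le_sum fun i _ => hbound _ (hRev i)
        _ = (n:ℝ) * ε := by rw [Finset.sum_const, Finset.card_univ, Fintype.card_fin,
              nsmul_eq_mul]
    calc ∑ j, ‖((cfc (fun t => h t - q.eval t) Δ).map Complex.ofReal).mulVec x j‖
        ≤ ∑ _j : Fin n, (n:ℝ) * ε * ∑ k, ‖x k‖ := by
          refine Finset.sum_le_sum fun j _ => ?_
          rw [Matrix.mulVec, dotProduct]
          refine (norm_sum_le _ _).trans ?_
          rw [Finset.mul_sum]
          refine Finset.sum_le_sum fun k _ => ?_
          rw [norm_mul, Matrix.map_apply, Complex.norm_real, Real.norm_eq_abs]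
          exact mul_le_mul_of_nonneg_right (hentry j k) (norm_nonneg _)
      _ = (n:ℝ) * ((n:ℝ) * ∑ k, ‖x k‖) * ε := by
          rw [Finset.sum_const, Finset.card_univ, Fintype.card_fin, nsmul_eq_mul]
          ring
  -- estimate 2
  have hest2 : ‖cfc q.eval T (inducedSignal x) - cfc h T (inducedSignal x)‖
      ≤ ε * ‖inducedSignal x‖ := by
    rw [← ContinuousLinearMap.sub_apply,
      ← cfc_sub q.eval h T (Polynomial.continuous q).continuousOn hh.continuousOn]
    refine (ContinuousLinearMap.le_opNorm _ _).trans ?_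
    refine mul_le_mul_of_nonneg_right ?_ (norm_nonneg _)
    refine norm_cfc_le hε0.le fun t ht => ?_
    rw [Real.norm_eq_abs, abs_sub_comm]
    exact hbound t (hRT t ht)
  -- combine
  have hcomb : ‖d‖ ≤ C * ε := by
    have h1 : d = (inducedSignal (((cfc h Δ).map Complex.ofReal).mulVec x)
        - inducedSignal (((cfc q.eval Δ).map Complex.ofReal).mulVec x))
        + (cfc q.eval T (inducedSignal x) - cfc h T (inducedSignal x)) := by
      rw [hd, hqT]; abel
    rw [h1]
    refine (norm_add_le _ _).trans ?_
    refine (add_le_add hest1 hest2).trans ?_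
    rw [hC, add_mul, add_mul, one_mul]
    have h2 : ε * ‖inducedSignal x‖ = ‖inducedSignal x‖ * ε := mul_comm _ _
    linarith [hε0.le]
  have hfin : ‖d‖ ≤ ‖d‖ / 2 := by
    calc ‖d‖ ≤ C * (‖d‖ / (2 * C)) := hcomb
      _ = ‖d‖ / 2 := by field_simp
  linarith
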